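/- Let φ : ℝ → ℝ be the Gaussian φ(x) = exp(−x²). Then for every p ∈ ℕ (p ≥ 0), the p-th derivative of φ satisfies sup_{x ∈ ℝ} |φ^{(p)}(x)| ≤ p!. -/

import Mathlib

open Polynomial Filter Real Topology

noncomputable def Qg : ℕ → Polynomial ℝ
  | 0 => 1
  | n+1 => (Qg n).derivative - 2 * X * Qg n

lemma Qg_succ (n : ℕ) : Qg (n+1) = (Qg n).derivative - 2 * X * Qg n := rfl

lemma Qg_deriv_pair (n : ℕ) :
    (Qg (n+1)).derivative = -(2*((n:ℝ[X])+1)) * Qg n ∧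
    (Qg (n+2)).derivative = -(2*((n:ℝ[X])+2)) * Qg (n+1) := by
  induction n with
  | zero =>
    constructor
    · simp [Qg]
    · rw [Qg_succ 1, Qg_succ 0]
      simp [Qg]
      ring
  | succ n ih =>
    obtain ⟨h1, h2⟩ := ih
    constructor
    · rw [h2]; push_cast; ring
    · have e2 : Qg (n+2) = -(2*((n:ℝ[X])+1)) * Qg n - 2*X*Qg (n+1) := by
        rw [Qg_succ (n+1), h1]
      rw [Qg_succ (n+2), h2]
      simp only [derivative_sub, derivative_mul, derivative_neg, derivative_X,
        derivative_natCast, derivative_add, derivative_one, derivative_ofNat]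
      rw [h1, h2, e2]
      push_cast
      ring

lemma tendsto_poly_gauss_atTop (P : ℝ[X]) :
    Tendsto (fun x => P.eval x * Real.exp (-x^2)) atTop (𝓝 0) := by
  have h1 : Tendsto (fun x => P.eval x / Real.exp x) atTop (𝓝 0) := P.tendsto_div_exp_atTop
  have h2 : Tendsto (fun x : ℝ => Real.exp (x - x^2)) atTop (𝓝 0) := by
    apply Real.tendsto_exp_atBot.comp
    have h3 : Tendsto (fun x : ℝ => x * (x - 1)) atTop atTop :=
      tendsto_id.atTop_mul_atTop₀ (tendsto_atTop_add_const_right _ (-1) tendsto_id)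
    have h4 := (tendsto_neg_atTop_atBot.comp h3)
    refine h4.congr fun x => ?_
    simp [Function.comp]
    ring
  have h5 := h1.mul h2
  rw [mul_zero] at h5
  refine h5.congr fun x => ?_
  rw [show x - x^2 = x + (-x^2) from by ring, Real.exp_add]
  field_simp

lemma tendsto_poly_gauss_cocompact (P : ℝ[X]) :
    Tendsto (fun x => |P.eval x * Real.exp (-x^2)|) (cocompact ℝ) (𝓝 0) := by
  rw [cocompact_eq_atBot_atTop]
  have habs : ∀ (Q : ℝ[X]), Tendsto (fun x => |Q.eval x * Real.exp (-x^2)|) atTop (𝓝 0) := by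
    intro Q
    simpa using (tendsto_poly_gauss_atTop Q).abs
  refine Tendsto.sup ?_ (habs P)
  have h := (habs (P.comp (-X))).comp tendsto_neg_atBot_atTop
  refine h.congr fun x => ?_
  simp [Function.comp, eval_comp]

lemma hasDerivAt_gauss (x : ℝ) :
    HasDerivAt (fun t : ℝ => Real.exp (-t ^ 2)) ((-2*x) * Real.exp (-x ^ 2)) x := by
  have h : HasDerivAt (fun t : ℝ => -t ^ 2) (-(2*x)) x := by
    have h0 : HasDerivAt (fun t : ℝ => t ^ 2) (2*x) x := by simpa using hasDerivAt_pow 2 x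
    exact h0.neg
  simpa [mul_comm] using h.exp

lemma iteratedDeriv_gauss (n : ℕ) :
    iteratedDeriv n (fun t : ℝ => Real.exp (-t ^ 2))
      = fun x => (Qg n).eval x * Real.exp (-x ^ 2) := by
  induction n with
  | zero => simp [Qg]
  | succ n ih =>
    rw [iteratedDeriv_succ, ih]
    funext x
    have h1 : HasDerivAt (fun x : ℝ => (Qg n).eval x * Real.exp (-x ^ 2))
        ((Qg n).derivative.eval x * Real.exp (-x ^ 2)
          + (Qg n).eval x * ((-2*x) * Real.exp (-x ^ 2))) x :=
      ((Qg n).hasDerivAt x).mul (hasDerivAt_gauss x)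
    rw [h1.deriv]
    simp [Qg]
    ring

lemma Qg_eval0 (x : ℝ) : (Qg 0).eval x = 1 := by simp [Qg]
lemma Qg_eval1 (x : ℝ) : (Qg 1).eval x = -2*x := by simp [Qg]
lemma Qg_eval2 (x : ℝ) : (Qg 2).eval x = 4*x^2 - 2 := by
  rw [Qg_succ 1, Qg_succ 0]; simp [Qg]; ring
lemma Qg_eval3 (x : ℝ) : (Qg 3).eval x = -8*x^3 + 12*x := by
  rw [Qg_succ 2, Qg_succ 1, Qg_succ 0]; simp [Qg]; ring

lemma exp_sq_lower (x : ℝ) : 1 + x^2 + x^4/2 + x^6/6 ≤ Real.exp (x^2) := by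
  have h := Real.sum_le_exp_of_nonneg (sq_nonneg x) 4
  have : ∑ i ∈ Finset.range 4, (x^2) ^ i / i.factorial = 1 + x^2 + x^4/2 + x^6/6 := by
    simp [Finset.sum_range_succ, Nat.factorial]
    ring
  linarith [this ▸ h]

lemma bound_of_poly (c a : ℝ) (x : ℝ) (h : |a| ≤ c * Real.exp (x^2)) :
    |a * Real.exp (-x^2)| ≤ c := by
  rw [abs_mul, abs_of_pos (Real.exp_pos _), Real.exp_neg]
  have hE : (0:ℝ) < Real.exp (x^2) := Real.exp_pos _
  calc |a| * (Real.exp (x^2))⁻¹ ≤ (c * Real.exp (x^2)) * (Real.exp (x^2))⁻¹ := by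
        apply mul_le_mul_of_nonneg_right h (by positivity)
    _ = c := by field_simp

/-- All iterated derivatives of the Gaussian `x ↦ exp(-x²)` satisfy
`sup_x |φ^{(p)}(x)| ≤ p!`. -/
theorem gaussian_iterated_deriv_bound (p : ℕ) (x : ℝ) :
    |iteratedDeriv p (fun t : ℝ => Real.exp (-t ^ 2)) x| ≤ (p.factorial : ℝ) := by
  induction p using Nat.strong_induction_on generalizing x with
  | _ p ih =>
  rw [iteratedDeriv_gauss]
  rcases p with _ | _ | _ | _ | q
  · show |(Qg 0).eval x * Real.exp (-x^2)| ≤ ((Nat.factorial 0 : ℕ) : ℝ)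
    have h := bound_of_poly 1 ((Qg 0).eval x) x
      (by rw [Qg_eval0]; simpa using Real.one_le_exp (sq_nonneg x))
    simpa [Nat.factorial] using h
  · show |(Qg 1).eval x * Real.exp (-x^2)| ≤ ((Nat.factorial 1 : ℕ) : ℝ)
    have h := bound_of_poly 1 ((Qg 1).eval x) x (by
      rw [Qg_eval1]
      rcases abs_cases (-2*x) with ⟨heq, _⟩ | ⟨heq, _⟩ <;> rw [heq] <;>
        nlinarith [exp_sq_lower x, sq_nonneg (x-1), sq_nonneg (x+1), sq_nonneg x,
          sq_nonneg (x^2), sq_nonneg (x^3)])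
    simpa [Nat.factorial] using h
  · show |(Qg 2).eval x * Real.exp (-x^2)| ≤ ((Nat.factorial 2 : ℕ) : ℝ)
    have h := bound_of_poly 2 ((Qg 2).eval x) x (by
      rw [Qg_eval2]
      rcases abs_cases (4*x^2-2) with ⟨heq, _⟩ | ⟨heq, _⟩ <;> rw [heq] <;>
        nlinarith [exp_sq_lower x, sq_nonneg (x^2-1), sq_nonneg x, sq_nonneg (x^2),
          sq_nonneg (x^3)])
    simpa [Nat.factorial] using h
  · show |(Qg 3).eval x * Real.exp (-x^2)| ≤ ((Nat.factorial 3 : ℕ) : ℝ)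
    have h := bound_of_poly 6 ((Qg 3).eval x) x (by
      rw [Qg_eval3, show (-8*x^3 + 12*x : ℝ) = x*(12-8*x^2) from by ring]
      rcases le_or_gt 0 x with hx | hx <;>
        rcases abs_cases (x*(12-8*x^2)) with ⟨heq, hs⟩ | ⟨heq, hs⟩ <;> rw [heq] <;>
        nlinarith [exp_sq_lower x, sq_nonneg (x-1), sq_nonneg (x+1),
          sq_nonneg (x*(x-4/3)), sq_nonneg (x*(x+4/3)), sq_nonneg x, sq_nonneg (x^3),
          hx, hs])
    simpa [Nat.factorial] using h
  · -- inductive case p = q + 4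
    show |(Qg (q+4)).eval x * Real.exp (-x^2)| ≤ ((Nat.factorial (q+4) : ℕ) : ℝ)
    set f : ℝ → ℝ := fun y => (Qg (q+4)).eval y * Real.exp (-y^2) with hf
    have hcont : Continuous fun y : ℝ => |f y| :=
      (((Qg (q+4)).continuous).mul (Real.continuous_exp.comp (continuous_pow 2).neg)).abs
    by_cases hall : ∀ y : ℝ, f y = 0
    · have : f x = 0 := hall x
      rw [show (Qg (q+4)).eval x * Real.exp (-x^2) = f x from rfl, this]
      simp
    · push_neg at hall
      obtain ⟨x₁, hx₁⟩ := hall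
      have hlim := tendsto_poly_gauss_cocompact (Qg (q+4))
      have hev : ∀ᶠ y in cocompact ℝ, |f y| ≤ |f x₁| :=
        (hlim.eventually_lt_const (abs_pos.mpr hx₁)).mono fun y hy => hy.le
      obtain ⟨x₀, hx₀⟩ := hcont.exists_forall_ge' x₁ hev
      have hfx₀ : f x₀ ≠ 0 := by
        intro h0
        exact hx₁ (abs_eq_zero.mp (le_antisymm ((hx₀ x₁).trans_eq (by rw [h0, abs_zero]))
          (abs_nonneg _)))
      have hfd : ∀ y : ℝ, HasDerivAt f ((Qg (q+5)).eval y * Real.exp (-y^2)) y := by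
        intro y
        have h : HasDerivAt f ((Qg (q+4)).derivative.eval y * Real.exp (-y^2)
            + (Qg (q+4)).eval y * ((-2*y) * Real.exp (-y^2))) y :=
          ((Qg (q+4)).hasDerivAt y).mul (hasDerivAt_gauss y)
        convert h using 1
        rw [Qg_succ (q+4)]
        simp
        ring
      have hd0 : (Qg (q+5)).eval x₀ * Real.exp (-x₀^2) = 0 := by
        rcases hfx₀.lt_or_gt with hneg | hpos
        · have hmin : IsLocalMin f x₀ := by
            apply Filter.Eventually.of_forall
            intro y
            have h1 := hx₀ y
            have h2 : |f x₀| = -(f x₀) := abs_of_neg hneg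
            linarith [neg_abs_le (f y)]
          rw [← (hfd x₀).deriv]
          exact hmin.deriv_eq_zero
        · have hmax : IsLocalMax f x₀ := by
            apply Filter.Eventually.of_forall
            intro y
            have h1 := hx₀ y
            have h2 : |f x₀| = f x₀ := abs_of_pos hpos
            linarith [le_abs_self (f y)]
          rw [← (hfd x₀).deriv]
          exact hmax.deriv_eq_zero
      have hQ50 : (Qg (q+5)).eval x₀ = 0 := by
        rcases mul_eq_zero.mp hd0 with h | h
        · exact h
        · exact absurd h (Real.exp_ne_zero _)
      have hrel1 : x₀ * (Qg (q+4)).eval x₀ = -((q:ℝ)+4) * (Qg (q+3)).eval x₀ := by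
        have h5 : (Qg (q+5)).eval x₀
            = -(2*((q:ℝ)+4)) * (Qg (q+3)).eval x₀ - 2*x₀*(Qg (q+4)).eval x₀ := by
          rw [Qg_succ (q+4), (Qg_deriv_pair (q+3)).1]
          simp only [eval_sub, eval_mul, eval_neg, eval_add, eval_natCast, eval_X,
            eval_ofNat, eval_one]
          push_cast
          ring
        rw [hQ50] at h5
        linarith
      have hrel2 : (Qg (q+4)).eval x₀
          = -(2*((q:ℝ)+3)) * (Qg (q+2)).eval x₀ - 2*x₀*(Qg (q+3)).eval x₀ := by
        rw [Qg_succ (q+3), (Qg_deriv_pair (q+2)).1]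
        simp only [eval_sub, eval_mul, eval_neg, eval_add, eval_natCast, eval_X,
          eval_ofNat, eval_one]
        push_cast
        ring
      have ih3 : |(Qg (q+3)).eval x₀ * Real.exp (-x₀^2)| ≤ ((q+3).factorial : ℝ) := by
        have h := ih (q+3) (by omega) x₀
        rwa [iteratedDeriv_gauss] at h
      have ih2 : |(Qg (q+2)).eval x₀ * Real.exp (-x₀^2)| ≤ ((q+2).factorial : ℝ) := by
        have h := ih (q+2) (by omega) x₀
        rwa [iteratedDeriv_gauss] at h
      have hfact4 : ((q+4).factorial : ℝ) = ((q:ℝ)+4) * ((q+3).factorial : ℝ) := by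
        rw [show q+4 = (q+3)+1 from rfl, Nat.factorial_succ]
        push_cast
        ring
      have hfact3 : ((q+3).factorial : ℝ) = ((q:ℝ)+3) * ((q+2).factorial : ℝ) := by
        rw [show q+3 = (q+2)+1 from rfl, Nat.factorial_succ]
        push_cast
        ring
      have key : |f x₀| ≤ ((q+4).factorial : ℝ) := by
        rcases le_or_gt 1 |x₀| with hge | hlt
        · have h1 : |x₀| * |f x₀| = ((q:ℝ)+4) * |(Qg (q+3)).eval x₀ * Real.exp (-x₀^2)| := by
            calc |x₀| * |f x₀| = |x₀ * ((Qg (q+4)).eval x₀ * Real.exp (-x₀^2))| := by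
                  rw [hf]
                  simp [abs_mul]
              _ = |(-((q:ℝ)+4)) * ((Qg (q+3)).eval x₀ * Real.exp (-x₀^2))| := by
                  rw [show x₀ * ((Qg (q+4)).eval x₀ * Real.exp (-x₀^2))
                      = (x₀ * (Qg (q+4)).eval x₀) * Real.exp (-x₀^2) from by ring, hrel1]
                  ring_nf
              _ = ((q:ℝ)+4) * |(Qg (q+3)).eval x₀ * Real.exp (-x₀^2)| := by
                  rw [abs_mul, abs_neg, abs_of_nonneg (by positivity : (0:ℝ) ≤ (q:ℝ)+4)]
          have h2 : |x₀| * |f x₀| ≤ ((q:ℝ)+4) * ((q+3).factorial : ℝ) := by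
            rw [h1]
            exact mul_le_mul_of_nonneg_left ih3 (by positivity)
          have h3 : |f x₀| ≤ |x₀| * |f x₀| := le_mul_of_one_le_left (abs_nonneg _) hge
          linarith [hfact4]
        · have h1 : |f x₀| ≤ 2*((q:ℝ)+3) * |(Qg (q+2)).eval x₀ * Real.exp (-x₀^2)|
              + 2*|x₀| * |(Qg (q+3)).eval x₀ * Real.exp (-x₀^2)| := by
            have e : f x₀ = (-(2*((q:ℝ)+3))) * ((Qg (q+2)).eval x₀ * Real.exp (-x₀^2))
                + (-(2*x₀)) * ((Qg (q+3)).eval x₀ * Real.exp (-x₀^2)) := by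
              show (Qg (q+4)).eval x₀ * Real.exp (-x₀^2) = _
              rw [hrel2]
              ring
            rw [e]
            refine (abs_add_le _ _).trans ?_
            rw [abs_mul (-(2*((q:ℝ)+3))), abs_mul (-(2*x₀))]
            have e1 : |(-(2*((q:ℝ)+3)))| = 2*((q:ℝ)+3) := by
              rw [abs_neg]; exact abs_of_nonneg (by positivity)
            have e2 : |(-(2*x₀))| = 2*|x₀| := by
              rw [abs_neg, abs_mul]; norm_num
            rw [e1, e2]
          have hq2pos : (0:ℝ) < ((q+2).factorial : ℝ) := by
            exact_mod_cast Nat.cast_pos.mpr (q+2).factorial_pos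
          have hq3pos : (0:ℝ) < ((q+3).factorial : ℝ) := by
            exact_mod_cast Nat.cast_pos.mpr (q+3).factorial_pos
          have h2 : 2*((q:ℝ)+3) * |(Qg (q+2)).eval x₀ * Real.exp (-x₀^2)|
              ≤ 2*((q:ℝ)+3) * ((q+2).factorial : ℝ) :=
            mul_le_mul_of_nonneg_left ih2 (by positivity)
          have h3 : |x₀| * |(Qg (q+3)).eval x₀ * Real.exp (-x₀^2)| ≤ 1 * ((q+3).factorial : ℝ) :=
            mul_le_mul hlt.le ih3 (abs_nonneg _) zero_le_one
          have hqnn : (0:ℝ) ≤ (q:ℝ) := Nat.cast_nonneg q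
          nlinarith [h1, h2, h3, hfact3, hfact4, mul_nonneg hqnn hq3pos.le]
      exact (hx₀ x).trans key
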